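/- Let ψ : ℝ^m → ℝ ∪ {∞} be proper closed convex with nonempty bounded set of minimizers, and suppose a sequence {y^k} satisfies ψ(y^{k+1}) ≤ min_{w} { ψ(w) + (1/(2γ))‖w - y^k‖² } (i.e., ψ(y^{k+1}) ≤ ψ^γ(y^k)) with ψ(y^{k+1}) ≤ ψ(y^k) for all k. If D > 0 bounds dist(y, argmin ψ) on the initial sublevel set {y : ψ(y) ≤ ψ(y^0)}, then ψ(y^k) - inf ψ ≤ 2D²/(γk) for all k ≥ 1. -/

import Mathlib

open scoped InnerProductSpace RealInnerProductSpace
open Filter Topology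

noncomputable section

abbrev E (n : ℕ) := EuclideanSpace ℝ (Fin n)

/-- Convexity for extended-real-valued functions. -/
def EConvexOn {n : ℕ} (f : E n → EReal) : Prop :=
  ∀ x y : E n, ∀ a b : ℝ, 0 ≤ a → 0 ≤ b → a + b = 1 →
    f (a • x + b • y) ≤ (a : EReal) * f x + (b : EReal) * f y

def ProperFun {n : ℕ} (f : E n → EReal) : Prop :=
  (∃ x, f x ≠ ⊤) ∧ ∀ x, f x ≠ ⊥

def ProperClosedConvex {n : ℕ} (f : E n → EReal) : Prop :=
  ProperFun f ∧ LowerSemicontinuous f ∧ EConvexOn f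

/-- `f` is strongly convex with modulus `μ`: `f - (μ/2)‖·‖²` is convex. -/
def StronglyConvexWithMod {n : ℕ} (μ : ℝ) (f : E n → EReal) : Prop :=
  EConvexOn (fun x => f x - ((μ / 2 * ‖x‖ ^ 2 : ℝ) : EReal))

/-- Fenchel conjugate. -/
def conjFn {n : ℕ} (f : E n → EReal) (y : E n) : EReal :=
  ⨆ x : E n, ((⟪x, y⟫_ℝ : ℝ) : EReal) - f x

/-- Convex subdifferential. -/
def Subdiff {n : ℕ} (f : E n → EReal) (x : E n) : Set (E n) :=
  {v | ∀ z, f x + ((⟪v, z - x⟫_ℝ : ℝ) : EReal) ≤ f z}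

/-- `p` is the proximal point of `x` for `h` with stepsize `γ`. -/
def IsProx {n : ℕ} (γ : ℝ) (h : E n → EReal) (x p : E n) : Prop :=
  ∀ z : E n, h p + ((1 / (2 * γ) * ‖p - x‖ ^ 2 : ℝ) : EReal) ≤
    h z + ((1 / (2 * γ) * ‖z - x‖ ^ 2 : ℝ) : EReal)

/-- Moreau envelope. -/
def moreauEnv {n : ℕ} (γ : ℝ) (h : E n → EReal) (x : E n) : EReal :=
  ⨅ z : E n, h z + ((1 / (2 * γ) * ‖z - x‖ ^ 2 : ℝ) : EReal)

/-- Dual objective `ψ(y) = f*(-Aᵀy) + g*(y)`. -/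
def dualObj {n m : ℕ} (f : E n → EReal) (g : E m → EReal) (A : E n →L[ℝ] E m)
    (y : E m) : EReal :=
  conjFn f (-(ContinuousLinearMap.adjoint A y)) + conjFn g y

/-- The alternating minimization envelope `ψ_γ(y) = -L_γ(x(y), z_γ(y), y)`. -/
def AME {n m : ℕ} (f : E n → EReal) (g : E m → EReal) (A : E n →L[ℝ] E m)
    (γ : ℝ) (xmin : E m → E n) (zmin : E m → E m) (y : E m) : EReal :=
  -(f (xmin y) + g (zmin y)
    + ((⟪y, A (xmin y) - zmin y⟫_ℝ + γ / 2 * ‖A (xmin y) - zmin y‖ ^ 2 : ℝ) : EReal))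


/-- Abstract sublinear rate: if a sequence satisfies the Moreau-envelope descent
inequality and is monotone, with minimizers within distance `D` on the initial
sublevel set, then `ψ(y^k) - inf ψ ≤ 2D²/(γ k)`. -/
theorem abstract_sublinear_rate
    {m : ℕ} (γ D : ℝ) (hγ : 0 < γ) (hD : 0 < D)
    (ψ : E m → EReal) (hψ : ProperClosedConvex ψ)
    (Ystar : Set (E m)) (hY : Ystar = {w : E m | ∀ v, ψ w ≤ ψ v})
    (hne : Ystar.Nonempty) (hbd : Bornology.IsBounded Ystar)
    (y : ℕ → E m)
    (hdec1 : ∀ k, ψ (y (k + 1)) ≤ moreauEnv γ ψ (y k))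
    (hdec2 : ∀ k, ψ (y (k + 1)) ≤ ψ (y k))
    (hdist : ∀ z : E m, ψ z ≤ ψ (y 0) → ∃ w ∈ Ystar, ‖z - w‖ ≤ D) :
    ∀ k : ℕ, 1 ≤ k →
      ψ (y k) ≤ (⨅ w : E m, ψ w) + ((2 * D ^ 2 / (γ * k) : ℝ) : EReal) := by
  classical
  obtain ⟨wst, hwst⟩ := hne
  rw [hY] at hwst
  obtain ⟨⟨x0, hx0⟩, hbot⟩ := hψ.1
  have hnetop : ψ wst ≠ ⊤ := fun h => hx0 (top_le_iff.1 (h ▸ hwst x0))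
  set s : ℝ := (ψ wst).toReal with hs
  have hcoe : ψ wst = (s : EReal) := (EReal.coe_toReal hnetop (hbot wst)).symm
  have hinf : (⨅ w : E m, ψ w) = (s : EReal) := by
    refine le_antisymm (hcoe ▸ iInf_le _ wst) (le_iInf fun v => hcoe ▸ hwst v)
  have hmono : ∀ k, ψ (y k) ≤ ψ (y 0) := by
    intro k
    induction k with
    | zero => exact le_refl _
    | succ n ih => exact (hdec2 n).trans ih
  have key : ∀ (k : ℕ) (α : ℝ), 0 ≤ α → α ≤ 1 →
      ψ (y (k + 1)) ≤ ((1 - α : ℝ) : EReal) * ψ (y k)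
        + ((α * s + α ^ 2 * D ^ 2 / (2 * γ) : ℝ) : EReal) := by
    intro k α hα0 hα1
    obtain ⟨w, hwY, hwd⟩ := hdist (y k) (hmono k)
    rw [hY] at hwY
    have hws : ψ w = (s : EReal) :=
      le_antisymm (hcoe ▸ hwY wst) (hcoe ▸ hwst w)
    set z := (1 - α) • y k + α • w with hz
    have hdiff : z - y k = α • (w - y k) := by
      rw [hz]; module
    have h1 : ‖z - y k‖ ^ 2 ≤ (α * D) ^ 2 := by
      have hn : ‖z - y k‖ ≤ α * D := by
        have hwd' : ‖w - y k‖ ≤ D := by rw [norm_sub_rev]; exact hwd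
        rw [hdiff, norm_smul, Real.norm_eq_abs, abs_of_nonneg hα0]
        exact mul_le_mul_of_nonneg_left hwd' hα0
      nlinarith [norm_nonneg (z - y k)]
    have hc : (1 / (2 * γ) * ‖z - y k‖ ^ 2 : ℝ) ≤ α ^ 2 * D ^ 2 / (2 * γ) := by
      calc 1 / (2 * γ) * ‖z - y k‖ ^ 2 ≤ 1 / (2 * γ) * (α * D) ^ 2 :=
            mul_le_mul_of_nonneg_left h1 (by positivity)
        _ = α ^ 2 * D ^ 2 / (2 * γ) := by ring
    have hconv := hψ.2.2 (y k) w (1 - α) α (by linarith) hα0 (by ring)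
    rw [hws] at hconv
    have hme : moreauEnv γ ψ (y k) ≤ ψ z + ((1 / (2 * γ) * ‖z - y k‖ ^ 2 : ℝ) : EReal) :=
      iInf_le _ z
    calc ψ (y (k + 1)) ≤ moreauEnv γ ψ (y k) := hdec1 k
      _ ≤ ψ z + ((1 / (2 * γ) * ‖z - y k‖ ^ 2 : ℝ) : EReal) := hme
      _ ≤ (((1 - α : ℝ) : EReal) * ψ (y k) + ((α : ℝ) : EReal) * ((s : ℝ) : EReal))
            + ((1 / (2 * γ) * ‖z - y k‖ ^ 2 : ℝ) : EReal) := add_le_add_left hconv _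
      _ ≤ (((1 - α : ℝ) : EReal) * ψ (y k) + ((α : ℝ) : EReal) * ((s : ℝ) : EReal))
            + ((α ^ 2 * D ^ 2 / (2 * γ) : ℝ) : EReal) :=
          add_le_add_right (EReal.coe_le_coe_iff.2 hc) _
      _ = ((1 - α : ℝ) : EReal) * ψ (y k)
            + ((α * s + α ^ 2 * D ^ 2 / (2 * γ) : ℝ) : EReal) := by
          rw [← EReal.coe_mul, add_assoc, ← EReal.coe_add]
  have bound : ∀ k : ℕ, 1 ≤ k → ψ (y k) ≤ ((s + 2 * D ^ 2 / (γ * k) : ℝ) : EReal) := by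
    intro k hk
    induction k, hk using Nat.le_induction with
    | base =>
        have h := key 0 1 zero_le_one le_rfl
        simp only [sub_self, EReal.coe_zero, zero_mul, zero_add] at h
        refine h.trans (EReal.coe_le_coe_iff.2 ?_)
        push_cast
        have hle : D ^ 2 / (2 * γ) ≤ 2 * D ^ 2 / γ := by
          rw [div_le_div_iff₀ (by positivity) (by positivity)]; nlinarith
        rw [mul_one]; norm_num; linarith
    | succ k hk1 ih =>
        rcases le_or_gt 2 k with hk2 | hk2
        · -- k ≥ 2, use α = 2/k
          have hkr : (2:ℝ) ≤ (k:ℝ) := by exact_mod_cast hk2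
          have hkpos : (0:ℝ) < (k:ℝ) := by linarith
          set α : ℝ := 2 / (k:ℝ) with hα
          have hα0 : 0 ≤ α := by positivity
          have hα1 : α ≤ 1 := by
            rw [hα, div_le_one hkpos]; linarith
          have h := key k α hα0 hα1
          have hmul : ((1 - α : ℝ) : EReal) * ψ (y k)
              ≤ ((1 - α : ℝ) : EReal) * ((s + 2 * D ^ 2 / (γ * k) : ℝ) : EReal) :=
            mul_le_mul_of_nonneg_left ih (by exact_mod_cast (by linarith : (0:ℝ) ≤ 1 - α))
          refine h.trans ((add_le_add_left hmul _).trans ?_)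
          rw [← EReal.coe_mul, ← EReal.coe_add]
          refine EReal.coe_le_coe_iff.2 ?_
          push_cast
          rw [hα]
          have hD2 : (0:ℝ) < D ^ 2 := by positivity
          have expand : (1 - 2 / (k:ℝ)) * (s + 2 * D ^ 2 / (γ * k))
              + (2 / (k:ℝ) * s + (2 / (k:ℝ)) ^ 2 * D ^ 2 / (2 * γ))
              = s + (2 * D ^ 2 / γ) * (((k:ℝ) - 1) / (k:ℝ) ^ 2) := by
            field_simp
            ring
          have hfrac : ((k:ℝ) - 1) / (k:ℝ) ^ 2 ≤ 1 / ((k:ℝ) + 1) := by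
            rw [div_le_div_iff₀ (by positivity) (by positivity)]
            nlinarith
          have h2 : 2 * D ^ 2 / (γ * ((k:ℝ) + 1)) = (2 * D ^ 2 / γ) * (1 / ((k:ℝ) + 1)) := by
            field_simp
          calc (1 - 2 / (k:ℝ)) * (s + 2 * D ^ 2 / (γ * k))
              + (2 / (k:ℝ) * s + (2 / (k:ℝ)) ^ 2 * D ^ 2 / (2 * γ))
              = s + (2 * D ^ 2 / γ) * (((k:ℝ) - 1) / (k:ℝ) ^ 2) := expand
            _ ≤ s + (2 * D ^ 2 / γ) * (1 / ((k:ℝ) + 1)) :=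
                add_le_add_right (mul_le_mul_of_nonneg_left hfrac (by positivity)) _
            _ = s + 2 * D ^ 2 / (γ * ((k:ℝ) + 1)) := by rw [h2]
        · -- k = 1, use α = 1
          interval_cases k
          have h := key 1 1 zero_le_one le_rfl
          simp only [sub_self, EReal.coe_zero, zero_mul, zero_add] at h
          refine h.trans (EReal.coe_le_coe_iff.2 ?_)
          push_cast
          have hle : D ^ 2 / (2 * γ) ≤ 2 * D ^ 2 / (γ * (1 + 1)) := by
            rw [div_le_div_iff₀ (by positivity) (by positivity)]; nlinarith [sq_nonneg D]
          norm_num at hle ⊢; linarith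
  intro k hk
  rw [hinf, ← EReal.coe_add]
  exact bound k hk
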